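/- (Graph-theoretic half of the normality heredity) Suppose a: [d] → ℝ induces a decomposition of P_G (every positive edge and negative edge pair is cycle-compatible via zero edges). If both G_+ and G_- satisfy the odd cycle condition, then G satisfies the odd cycle condition. -/

import Mathlib

open SimpleGraph Walk

/-- The odd cycle condition: any two vertex-disjoint odd cycles are joined by a bridge. -/
def OddCycleCondition {V : Type*} (G : SimpleGraph V) : Prop :=
  ∀ (u v : V) (C : G.Walk u u) (C' : G.Walk v v),
    C.IsCycle → C'.IsCycle → Odd C.length → Odd C'.length →
    (∀ x ∈ C.support, x ∉ C'.support) →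
    ∃ x y, x ∈ C.support ∧ y ∈ C'.support ∧ G.Adj x y

lemma path_edge_len {V : Type*} {H : SimpleGraph V} {v u : V} (p : H.Walk v u)
    (hnd : p.support.Nodup) (he : s(u, v) ∈ p.edges) : p.length = 1 := by
  induction p with
  | nil => simp at he
  | @cons x b y h q ih =>
    rw [Walk.edges_cons, List.mem_cons] at he
    rw [Walk.support_cons, List.nodup_cons] at hnd
    rcases he with he | he
    · rw [Sym2.eq_iff] at he
      rcases he with ⟨h1, h2⟩ | ⟨h1, h2⟩
      · exfalso; subst h1 h2; exact hnd.1 q.end_mem_support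
      · subst h1
        cases q with
        | nil => simp
        | cons h' q' =>
          exfalso
          rw [Walk.support_cons, List.nodup_cons] at hnd
          exact hnd.2.1 q'.end_mem_support
    · exfalso
      exact hnd.1 (q.snd_mem_support_of_mem_edges he)

lemma extract_odd_cycle {V : Type*} [DecidableEq V] {H : SimpleGraph V} :
    ∀ (n : ℕ) {u : V} (w : H.Walk u u), w.length = n → Odd w.length →
      ∃ (x : V) (c : H.Walk x x), c.IsCycle ∧ Odd c.length ∧
        ∀ z ∈ c.support, z ∈ w.support := by
  intro n
  induction n using Nat.strong_induction_on with
  | _ n IH =>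
    intro u w hlen hodd
    cases w with
    | nil => simp at hodd
    | @cons _ v _ h p =>
      by_cases hnd : p.support.Nodup
      · by_cases hedge : s(u, v) ∈ p.edges
        · exfalso
          have h1 := path_edge_len p hnd hedge
          rw [Walk.length_cons, h1] at hodd
          simp [Nat.odd_iff] at hodd
        · refine ⟨u, Walk.cons h p, ?_, hodd, fun z hz => hz⟩
          rw [Walk.cons_isCycle_iff]
          exact ⟨(Walk.isPath_def p).2 hnd, hedge⟩
      · obtain ⟨x, hx⟩ := List.exists_duplicate_iff_not_nodup.2 hnd
        have hxm : x ∈ p.support := hx.mem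
        have hcount : 2 ≤ p.support.count x := List.duplicate_iff_two_le_count.1 hx
        -- split p at first occurrence of x
        have hspec := p.take_spec hxm
        have hsupp : p.support = (p.takeUntil x hxm).support ++ (p.dropUntil x hxm).support.tail := by
          conv_lhs => rw [← hspec]
          exact Walk.support_append _ _
        have hcount1 : (p.takeUntil x hxm).support.count x = 1 :=
          p.count_support_takeUntil_eq_one hxm
        have hxtail : x ∈ (p.dropUntil x hxm).support.tail := by
          by_contra hcon
          rw [hsupp, List.count_append, hcount1, List.count_eq_zero_of_not_mem hcon] at hcount
          omega
        have hlen_split : p.length = (p.takeUntil x hxm).length + (p.dropUntil x hxm).length := by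
          conv_lhs => rw [← hspec]
          exact Walk.length_append _ _
        set p1 := p.takeUntil x hxm with hp1
        set p2 := p.dropUntil x hxm with hp2
        cases hp2e : p2 with
        | nil => rw [hp2e] at hxtail; simp at hxtail
        | @cons _ y _ h2 q =>
          rw [hp2e] at hxtail
          rw [Walk.support_cons] at hxtail
          simp only [List.tail_cons] at hxtail
          -- hxtail : x ∈ q.support
          set q1 := q.takeUntil x hxtail with hq1
          set q2 := q.dropUntil x hxtail with hq2
          have hqspec := q.take_spec hxtail
          have hqlen : q.length = q1.length + q2.length := by
            conv_lhs => rw [← hqspec]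
            exact Walk.length_append _ _
          have hp2len : p2.length = 1 + q.length := by rw [hp2e]; simp [Walk.length_cons]; omega
          -- two closed walks
          set c1 : H.Walk x x := Walk.cons h2 q1 with hc1
          set c2 : H.Walk u u := Walk.cons h (p1.append q2) with hc2
          have hc1len : c1.length = 1 + q1.length := by simp [hc1, Walk.length_cons]; omega
          have hc2len : c2.length = 1 + (p1.length + q2.length) := by
            simp [hc2, Walk.length_cons, Walk.length_append]; omega
          have htot : c1.length + c2.length = n := by
            rw [hc1len, hc2len, ← hlen, Walk.length_cons, hlen_split, hp2len, hqlen]; omega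
          have hsub1 : ∀ z ∈ c1.support, z ∈ (Walk.cons h p).support := by
            intro z hz
            rw [hc1, Walk.support_cons] at hz
            rw [Walk.support_cons]
            rcases hz with _ | hz
            · exact List.mem_cons_of_mem _ hxm
            · rename_i hz
              right
              have : z ∈ q.support := q.support_takeUntil_subset hxtail hz
              have : z ∈ p2.support := by rw [hp2e, Walk.support_cons]; exact List.mem_cons_of_mem _ this
              exact p.support_dropUntil_subset hxm this
          have hsub2 : ∀ z ∈ c2.support, z ∈ (Walk.cons h p).support := by
            intro z hz
            rw [hc2, Walk.support_cons] at hz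
            rw [Walk.support_cons]
            rcases hz with _ | hz
            · exact List.mem_cons_self
            · rename_i hz
              right
              have := Walk.support_append p1 q2
              rw [this] at hz
              rcases List.mem_append.1 hz with hz | hz
              · exact p.support_takeUntil_subset hxm hz
              · have : z ∈ q2.support := List.mem_of_mem_tail hz
                have : z ∈ q.support := q.support_dropUntil_subset hxtail this
                have : z ∈ p2.support := by rw [hp2e, Walk.support_cons]; exact List.mem_cons_of_mem _ this
                exact p.support_dropUntil_subset hxm this
          rcases Nat.even_or_odd c1.length with he1 | ho1
          · -- c2 odd
            have ho2 : Odd c2.length := by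
              rw [hlen] at hodd
              rw [Nat.odd_iff] at hodd ⊢
              rw [Nat.even_iff] at he1
              omega
            have hlt : c2.length < n := by rw [← htot]; omega
            obtain ⟨x', c, hcyc, hco, hcs⟩ := IH c2.length hlt c2 rfl ho2
            exact ⟨x', c, hcyc, hco, fun z hz => hsub2 z (hcs z hz)⟩
          · have hlt : c1.length < n := by rw [← htot, hc2len]; omega
            obtain ⟨x', c, hcyc, hco, hcs⟩ := IH c1.length hlt c1 rfl ho1
            exact ⟨x', c, hcyc, hco, fun z hz => hsub1 z (hcs z hz)⟩
lemma build_walk {d : ℕ} {G : SimpleGraph (Fin d)} {a : Fin d → ℝ}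
    (hcomp : ∀ i j k l, G.Adj i j → G.Adj k l → 0 < a i + a j → a k + a l < 0 →
      ∃ p q r s : Fin d, ({p, q} : Set (Fin d)) = {i, j} ∧
        ({r, s} : Set (Fin d)) = {k, l} ∧
        G.Adj q r ∧ G.Adj s p ∧ a q + a r = 0 ∧ a s + a p = 0)
    {i j : Fin d} (hij : G.Adj i j) (hij2 : 0 < a i + a j)
    {x y : Fin d} (w : G.Walk x y) :
    ∃ w' : (SimpleGraph.fromRel fun i j => G.Adj i j ∧ 0 ≤ a i + a j).Walk x y,
      w'.length % 2 = w.length % 2 ∧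
      ∀ z ∈ w'.support, z ∈ w.support ∨ z = i ∨ z = j := by
  set Hp := SimpleGraph.fromRel fun i j => G.Adj i j ∧ 0 ≤ a i + a j with hHp
  have hadj : ∀ {p q : Fin d}, G.Adj p q → 0 ≤ a p + a q → Hp.Adj p q := by
    intro p q h hs
    rw [hHp, SimpleGraph.fromRel_adj]
    exact ⟨h.ne, Or.inl ⟨h, hs⟩⟩
  induction w with
  | nil => exact ⟨Walk.nil, rfl, by simp⟩
  | @cons xx bb yy h q ih =>
    obtain ⟨w'', hpar, hsupp⟩ := ih
    by_cases hsgn : 0 ≤ a xx + a bb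
    · refine ⟨Walk.cons (hadj h hsgn) w'', ?_, ?_⟩
      · simp only [Walk.length_cons]; omega
      · intro z hz
        rw [Walk.support_cons] at hz
        rcases hz with _ | hz
        · left; rw [Walk.support_cons]; exact List.mem_cons_self
        · rename_i hz
          rcases hsupp z hz with hz | hz
          · left; rw [Walk.support_cons]; exact List.mem_cons_of_mem _ hz
          · right; exact hz
    · push_neg at hsgn
      obtain ⟨p, qq, r, s, hpq, hrs, hqr, hsp, hqr0, hsp0⟩ :=
        hcomp i j xx bb hij h hij2 hsgn
      -- Hp edges : qq-r, s-p (zero), p-qq (positive since {p,qq}={i,j})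
      have hpqpos : G.Adj p qq ∧ 0 < a p + a qq := by
        rcases Set.pair_eq_pair_iff.1 hpq with ⟨h1, h2⟩ | ⟨h1, h2⟩ <;> subst h1 <;> subst h2
        · exact ⟨hij, hij2⟩
        · exact ⟨hij.symm, by linarith [hij2]⟩
      have hepq : Hp.Adj p qq := hadj hpqpos.1 (le_of_lt hpqpos.2)
      have heqr : Hp.Adj qq r := hadj hqr (le_of_eq hqr0.symm)
      have hesp : Hp.Adj s p := hadj hsp (le_of_eq hsp0.symm)
      have hpmem : p = i ∨ p = j := by
        have : p ∈ ({i, j} : Set (Fin d)) := hpq ▸ Set.mem_insert p {qq}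
        simpa using this
      have hqmem : qq = i ∨ qq = j := by
        have : qq ∈ ({i, j} : Set (Fin d)) := hpq ▸ (by simp : qq ∈ ({p, qq} : Set (Fin d)))
        simpa using this
      rcases Set.pair_eq_pair_iff.1 hrs with ⟨h1, h2⟩ | ⟨h1, h2⟩
      · -- r = xx, s = bb : path xx - qq - p - bb
        subst h1; subst h2
        refine ⟨Walk.cons heqr.symm (Walk.cons hepq.symm (Walk.cons hesp.symm w'')), ?_, ?_⟩
        · simp only [Walk.length_cons]; omega
        · intro z hz
          simp only [Walk.support_cons, List.mem_cons] at hz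
          rcases hz with rfl | rfl | rfl | hz
          · left; rw [Walk.support_cons]; exact List.mem_cons_self
          · right; exact hqmem
          · right; exact hpmem
          · rcases hsupp z hz with hz | hz
            · left; rw [Walk.support_cons]; exact List.mem_cons_of_mem _ hz
            · right; exact hz
      · -- r = bb, s = xx : path xx - p - qq - bb
        subst h1; subst h2
        refine ⟨Walk.cons hesp (Walk.cons hepq (Walk.cons heqr w'')), ?_, ?_⟩
        · simp only [Walk.length_cons]; omega
        · intro z hz
          simp only [Walk.support_cons, List.mem_cons] at hz
          rcases hz with rfl | rfl | rfl | hz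
          · left; rw [Walk.support_cons]; exact List.mem_cons_self
          · right; exact hpmem
          · right; exact hqmem
          · rcases hsupp z hz with hz | hz
            · left; rw [Walk.support_cons]; exact List.mem_cons_of_mem _ hz
            · right; exact hz

lemma key_lemma {d : ℕ} {G : SimpleGraph (Fin d)} {a : Fin d → ℝ}
    (hcomp : ∀ i j k l, G.Adj i j → G.Adj k l → 0 < a i + a j → a k + a l < 0 →
      ∃ p q r s : Fin d, ({p, q} : Set (Fin d)) = {i, j} ∧
        ({r, s} : Set (Fin d)) = {k, l} ∧
        G.Adj q r ∧ G.Adj s p ∧ a q + a r = 0 ∧ a s + a p = 0)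
    (hp : OddCycleCondition (SimpleGraph.fromRel fun i j => G.Adj i j ∧ 0 ≤ a i + a j))
    {u v : Fin d} (C : G.Walk u u) (C' : G.Walk v v)
    (hCc : C.IsCycle) (hC'c : C'.IsCycle) (hoC : Odd C.length) (hoC' : Odd C'.length)
    (hdisj : ∀ x ∈ C.support, x ∉ C'.support)
    (hC'nn : ∀ x y : Fin d, s(x, y) ∈ C'.edges → 0 ≤ a x + a y)
    (hCca : (∀ x y : Fin d, s(x, y) ∈ C.edges → 0 ≤ a x + a y) ∨
      ∃ i j : Fin d, s(i, j) ∈ C.edges ∧ 0 < a i + a j) :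
    ∃ x y, x ∈ C.support ∧ y ∈ C'.support ∧ G.Adj x y := by
  set Hp := SimpleGraph.fromRel fun i j => G.Adj i j ∧ 0 ≤ a i + a j with hHp
  have hback : ∀ {x y : Fin d}, Hp.Adj x y → G.Adj x y := by
    intro x y h
    rw [hHp, SimpleGraph.fromRel_adj] at h
    rcases h.2 with h' | h'
    · exact h'.1
    · exact h'.1.symm
  -- transfer C'
  have hT' : ∀ e ∈ C'.edges, e ∈ Hp.edgeSet := by
    intro e he
    refine Sym2.ind (fun x y he => ?_) e he
    rw [SimpleGraph.mem_edgeSet, hHp, SimpleGraph.fromRel_adj]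
    exact ⟨(C'.adj_of_mem_edges he).ne, Or.inl ⟨C'.adj_of_mem_edges he, hC'nn x y he⟩⟩
  set D' := C'.transfer Hp hT' with hD'
  -- odd cycle in Hp with support inside C.support
  have hex : ∃ (x0 : Fin d) (c : Hp.Walk x0 x0), c.IsCycle ∧ Odd c.length ∧
      ∀ z ∈ c.support, z ∈ C.support := by
    rcases hCca with hnn | ⟨i, j, hije, hijpos⟩
    · have hT : ∀ e ∈ C.edges, e ∈ Hp.edgeSet := by
        intro e he
        refine Sym2.ind (fun x y he => ?_) e he
        rw [SimpleGraph.mem_edgeSet, hHp, SimpleGraph.fromRel_adj]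
        exact ⟨(C.adj_of_mem_edges he).ne, Or.inl ⟨C.adj_of_mem_edges he, hnn x y he⟩⟩
      refine ⟨u, C.transfer Hp hT, hCc.transfer hT, ?_, ?_⟩
      · rw [Walk.length_transfer]; exact hoC
      · intro z hz; rwa [Walk.support_transfer] at hz
    · have hijadj : G.Adj i j := C.adj_of_mem_edges hije
      obtain ⟨w', hpar, hsupp⟩ := build_walk hcomp hijadj hijpos C
      have hodd' : Odd w'.length := by
        rw [Nat.odd_iff] at hoC ⊢; omega
      obtain ⟨x0, c, hcyc, hco, hcs⟩ := extract_odd_cycle w'.length w' rfl hodd'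
      refine ⟨x0, c, hcyc, hco, ?_⟩
      intro z hz
      rcases hsupp z (hcs z hz) with hz' | rfl | rfl
      · exact hz'
      · exact C.fst_mem_support_of_mem_edges hije
      · exact C.snd_mem_support_of_mem_edges hije
  obtain ⟨x0, c, hcyc, hco, hcs⟩ := hex
  have hD'c : D'.IsCycle := hC'c.transfer hT'
  have hD'o : Odd D'.length := by rw [hD', Walk.length_transfer]; exact hoC'
  have hdisj2 : ∀ z ∈ c.support, z ∉ D'.support := by
    intro z hz
    rw [hD', Walk.support_transfer]
    exact hdisj z (hcs z hz)
  obtain ⟨x, y, hx, hy, hxy⟩ := hp x0 v c D' hcyc hD'c hco hD'o hdisj2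
  rw [hD', Walk.support_transfer] at hy
  exact ⟨x, y, hcs x hx, hy, hback hxy⟩

lemma direct_bridge {d : ℕ} {G : SimpleGraph (Fin d)} {a : Fin d → ℝ}
    (hcomp : ∀ i j k l, G.Adj i j → G.Adj k l → 0 < a i + a j → a k + a l < 0 →
      ∃ p q r s : Fin d, ({p, q} : Set (Fin d)) = {i, j} ∧
        ({r, s} : Set (Fin d)) = {k, l} ∧
        G.Adj q r ∧ G.Adj s p ∧ a q + a r = 0 ∧ a s + a p = 0)
    {u v : Fin d} (C : G.Walk u u) (C' : G.Walk v v)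
    {i j k l : Fin d} (hije : s(i, j) ∈ C.edges) (hijpos : 0 < a i + a j)
    (hkle : s(k, l) ∈ C'.edges) (hklneg : a k + a l < 0) :
    ∃ x y, x ∈ C.support ∧ y ∈ C'.support ∧ G.Adj x y := by
  obtain ⟨p, q, r, s, hpq, hrs, hqr, _, _, _⟩ :=
    hcomp i j k l (C.adj_of_mem_edges hije) (C'.adj_of_mem_edges hkle) hijpos hklneg
  have hq : q ∈ C.support := by
    have : q ∈ ({i, j} : Set (Fin d)) := hpq ▸ (by simp : q ∈ ({p, q} : Set (Fin d)))
    rcases this with rfl | h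
    · exact C.fst_mem_support_of_mem_edges hije
    · simp only [Set.mem_singleton_iff] at h; subst h
      exact C.snd_mem_support_of_mem_edges hije
  have hr : r ∈ C'.support := by
    have : r ∈ ({k, l} : Set (Fin d)) := hrs ▸ Set.mem_insert r {s}
    rcases this with rfl | h
    · exact C'.fst_mem_support_of_mem_edges hkle
    · simp only [Set.mem_singleton_iff] at h; subst h
      exact C'.snd_mem_support_of_mem_edges hkle
  exact ⟨q, r, hq, hr, hqr⟩

/-- if a weighting induces a decomposition of P_G and both G_+ and G_-
satisfy the odd cycle condition, then so does G. -/
theorem stmt15 {d : ℕ} (G : SimpleGraph (Fin d)) (hG : G.Connected) (a : Fin d → ℝ)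
    (hpos : ∃ i j, G.Adj i j ∧ 0 < a i + a j)
    (hneg : ∃ i j, G.Adj i j ∧ a i + a j < 0)
    (hcomp : ∀ i j k l, G.Adj i j → G.Adj k l → 0 < a i + a j → a k + a l < 0 →
      ∃ p q r s : Fin d, ({p, q} : Set (Fin d)) = {i, j} ∧
        ({r, s} : Set (Fin d)) = {k, l} ∧
        G.Adj q r ∧ G.Adj s p ∧ a q + a r = 0 ∧ a s + a p = 0)
    (hp : OddCycleCondition (SimpleGraph.fromRel fun i j => G.Adj i j ∧ 0 ≤ a i + a j))
    (hm : OddCycleCondition (SimpleGraph.fromRel fun i j => G.Adj i j ∧ a i + a j ≤ 0)) :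
    OddCycleCondition G := by
  classical
  -- negated weighting
  set b : Fin d → ℝ := fun k => -a k with hb
  have hm' : OddCycleCondition (SimpleGraph.fromRel fun i j => G.Adj i j ∧ 0 ≤ b i + b j) := by
    have hrel : (fun i j => G.Adj i j ∧ 0 ≤ b i + b j) =
        (fun i j => G.Adj i j ∧ a i + a j ≤ 0) := by
      funext i j
      simp only [hb]
      apply propext
      constructor
      · rintro ⟨h1, h2⟩; exact ⟨h1, by linarith⟩
      · rintro ⟨h1, h2⟩; exact ⟨h1, by linarith⟩
    rw [hrel]
    exact hm
  have hcomp' : ∀ i j k l, G.Adj i j → G.Adj k l → 0 < b i + b j → b k + b l < 0 →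
      ∃ p q r s : Fin d, ({p, q} : Set (Fin d)) = {i, j} ∧
        ({r, s} : Set (Fin d)) = {k, l} ∧
        G.Adj q r ∧ G.Adj s p ∧ b q + b r = 0 ∧ b s + b p = 0 := by
    intro i j k l h1 h2 hbp hbn
    simp only [hb] at hbp hbn
    obtain ⟨p, q, r, s, hpq, hrs, hqr, hsp, hqr0, hsp0⟩ :=
      hcomp k l i j h2 h1 (by linarith) (by linarith)
    refine ⟨s, r, q, p, ?_, ?_, hqr.symm, hsp.symm, ?_, ?_⟩
    · rw [Set.pair_comm]; exact hrs
    · rw [Set.pair_comm]; exact hpq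
    · simp only [hb]; linarith
    · simp only [hb]; linarith
  intro u v C C' hCc hC'c hoC hoC' hdisj
  have hdisj' : ∀ x ∈ C'.support, x ∉ C.support := fun x hx hx' => hdisj x hx' hx
  by_cases Pp : ∃ x y : Fin d, s(x, y) ∈ C.edges ∧ 0 < a x + a y
  · by_cases P'n : ∃ x y : Fin d, s(x, y) ∈ C'.edges ∧ a x + a y < 0
    · obtain ⟨i, j, hije, hijpos⟩ := Pp
      obtain ⟨k, l, hkle, hklneg⟩ := P'n
      exact direct_bridge hcomp C C' hije hijpos hkle hklneg
    · -- C' nonneg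
      push_neg at P'n
      exact key_lemma hcomp hp C C' hCc hC'c hoC hoC' hdisj
        (fun x y he => P'n x y he) (Or.inr Pp)
  · push_neg at Pp
    by_cases P'p : ∃ x y : Fin d, s(x, y) ∈ C'.edges ∧ 0 < a x + a y
    · by_cases Pn : ∃ x y : Fin d, s(x, y) ∈ C.edges ∧ a x + a y < 0
      · obtain ⟨i, j, hije, hijpos⟩ := P'p
        obtain ⟨k, l, hkle, hklneg⟩ := Pn
        obtain ⟨x, y, hx, hy, hxy⟩ := direct_bridge hcomp C' C hije hijpos hkle hklneg
        exact ⟨y, x, hy, hx, hxy.symm⟩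
      · -- C all zero (nonneg), C' has pos edge : swapped key with a
        push_neg at Pn
        obtain ⟨x, y, hx, hy, hxy⟩ := key_lemma hcomp hp C' C hC'c hCc hoC' hoC hdisj'
          (fun x y he => Pn x y he) (Or.inr P'p)
        exact ⟨y, x, hy, hx, hxy.symm⟩
    · -- both nonpos : key with b = -a
      push_neg at P'p
      exact key_lemma hcomp' hm' C C' hCc hC'c hoC hoC' hdisj
        (fun x y he => by simp only [hb]; linarith [P'p x y he])
        (Or.inl fun x y he => by simp only [hb]; linarith [Pp x y he])
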